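/- Let F be a field, let ∅ ≠ O ⊆ F \ {0,1}, and let f be an O-preserving permutation of F ∪ {∞}. Then for every triple of distinct elements a,b,c ∈ F ∪ {∞} there exists a permutation α of O such that for every x ∈ O, f(g_x(a,b,c)) = g_{α(x)}(f(a),f(b),f(c)), where g_x(a,b,c) is the unique point d ∉ {a,b,c} with [a,b;c,d] = x. -/

import Mathlib

open scoped Classical

/-- The cross-ratio `[a,b;c,d]` on the projective line `F ∪ {∞}` (modelled as
`Option F`, with `none` playing the role of `∞`), with the usual conventions
at `∞`; junk value `0` when two or more of the arguments are `∞`. -/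
noncomputable def crossRatio {F : Type*} [Field F] :
    Option F → Option F → Option F → Option F → F
  | none,   some b, some c, some d => (d - b) / (c - b)
  | some a, none,   some c, some d => (c - a) / (d - a)
  | some a, some b, none,   some d => (d - b) / (d - a)
  | some a, some b, some c, none   => (c - a) / (c - b)
  | some a, some b, some c, some d => ((c - a) / (c - b)) * ((d - b) / (d - a))
  | _, _, _, _ => 0

/-- A permutation `f` of the projective line is `O`-preserving if for all
quadruples of distinct points, `[a,b;c,d] ∈ O ↔ [f a, f b; f c, f d] ∈ O`. -/
def OPreserving {F : Type*} [Field F] (O : Set F) (f : Equiv.Perm (Option F)) : Prop :=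
  ∀ a b c d : Option F, a ≠ b → a ≠ c → a ≠ d → b ≠ c → b ≠ d → c ≠ d →
    (crossRatio a b c d ∈ O ↔ crossRatio (f a) (f b) (f c) (f d) ∈ O)

noncomputable def gpoint {F : Type*} [Field F] : Option F → Option F → Option F → F → Option F
  | none,   some b, some c, x => some (b + x * (c - b))
  | some a, none,   some c, x => some (a + (c - a) / x)
  | some a, some b, none,   x => some (a + (a - b) / (x - 1))
  | some a, some b, some c, x =>
      if x = (c - a) / (c - b) then none
      else some ((b * (c - a) - x * a * (c - b)) / ((c - a) - x * (c - b)))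
  | _, _, _, _ => none

lemma gpoint_spec {F : Type*} [Field F] (a b c : Option F)
    (hab : a ≠ b) (hac : a ≠ c) (hbc : b ≠ c) (x : F) (hx0 : x ≠ 0) (hx1 : x ≠ 1) :
    crossRatio a b c (gpoint a b c x) = x := by
  match a, b, c with
  | none, some b, some c =>
    have hbc' : c - b ≠ 0 := sub_ne_zero.mpr (fun h => hbc (by rw [h]))
    simp only [gpoint, crossRatio]
    field_simp
    ring
  | some a, none, some c =>
    have hac' : c - a ≠ 0 := sub_ne_zero.mpr (fun h => hac (by rw [h]))
    simp only [gpoint, crossRatio]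
    rw [add_sub_cancel_left, div_div_cancel₀ hac']
  | some a, some b, none =>
    have hab' : a - b ≠ 0 := sub_ne_zero.mpr (fun h => hab (by rw [h]))
    have hx1' : x - 1 ≠ 0 := sub_ne_zero.mpr hx1
    simp only [gpoint, crossRatio]
    rw [add_sub_cancel_left]
    have h1 : a + (a - b) / (x - 1) - b = (a - b) * x / (x - 1) := by
      field_simp; ring
    rw [h1]
    field_simp
  | some a, some b, some c =>
    have hab' : b - a ≠ 0 := sub_ne_zero.mpr (fun h => hab (by rw [h]))
    have hac' : c - a ≠ 0 := sub_ne_zero.mpr (fun h => hac (by rw [h]))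
    have hbc' : c - b ≠ 0 := sub_ne_zero.mpr (fun h => hbc (by rw [h]))
    simp only [gpoint]
    split_ifs with hk
    · simp only [crossRatio]; exact hk.symm
    · have hM : (c - a) - x * (c - b) ≠ 0 := by
        intro h
        apply hk
        rw [sub_eq_zero.mp h, mul_div_assoc, div_self hbc', mul_one]
      set N := b * (c - a) - x * a * (c - b) with hN
      set M := (c - a) - x * (c - b) with hMdef
      have hDa : N / M - a = (c - a) * (b - a) / M := by
        rw [div_sub' hM, hN, hMdef]; ring_nf
      have hDb : N / M - b = x * (c - b) * (b - a) / M := by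
        rw [div_sub' hM, hN, hMdef]; ring_nf
      have hDa' : N / M - a ≠ 0 := by
        rw [hDa]; exact div_ne_zero (mul_ne_zero hac' hab') hM
      simp only [crossRatio]
      rw [hDa, hDb]
      field_simp

lemma crossRatio_self₁ {F : Type*} [Field F] (a b c : Option F) :
    crossRatio a b c a = 0 := by
  rcases a with _ | a <;> rcases b with _ | b <;> rcases c with _ | c <;>
    simp [crossRatio, sub_self]

lemma crossRatio_self₂ {F : Type*} [Field F] (a b c : Option F) :
    crossRatio a b c b = 0 := by
  rcases a with _ | a <;> rcases b with _ | b <;> rcases c with _ | c <;>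
    simp [crossRatio, sub_self]

lemma crossRatio_self₃ {F : Type*} [Field F] (a b c : Option F) :
    crossRatio a b c c = 0 ∨ crossRatio a b c c = 1 := by
  rcases a with _ | a <;> rcases b with _ | b <;> rcases c with _ | c <;>
    simp only [crossRatio]
  · exact Or.inl trivial
  · exact Or.inl trivial
  · exact Or.inl trivial
  · rcases eq_or_ne (c - b) 0 with h | h
    · left; simp [h]
    · right; exact div_self h
  · exact Or.inl trivial
  · rcases eq_or_ne (c - a) 0 with h | h
    · left; simp [h]
    · right; exact div_self h
  · exact Or.inl trivial
  · rcases eq_or_ne (c - a) 0 with h | h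
    · left; simp [h]
    · rcases eq_or_ne (c - b) 0 with h2 | h2
      · left; simp [h2]
      · right; field_simp

lemma crossRatio_ne {F : Type*} [Field F] {a b c d : Option F} {x : F}
    (hx0 : x ≠ 0) (hx1 : x ≠ 1) (h : crossRatio a b c d = x) :
    d ≠ a ∧ d ≠ b ∧ d ≠ c := by
  refine ⟨?_, ?_, ?_⟩ <;> rintro rfl
  · exact hx0 (h.symm.trans (crossRatio_self₁ d b c))
  · exact hx0 (h.symm.trans (crossRatio_self₂ a d c))
  · rcases crossRatio_self₃ a b d with h' | h'
    · exact hx0 (h.symm.trans h')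
    · exact hx1 (h.symm.trans h')

lemma gpoint_unique {F : Type*} [Field F] {a b c : Option F}
    (hab : a ≠ b) (hac : a ≠ c) (hbc : b ≠ c) {x : F} (hx0 : x ≠ 0) (hx1 : x ≠ 1)
    {d : Option F} (hda : d ≠ a) (hdb : d ≠ b) (hdc : d ≠ c)
    (h : crossRatio a b c d = x) : d = gpoint a b c x := by
  match a, b, c with
  | none, some b, some c =>
    obtain ⟨dd, rfl⟩ : ∃ dd, d = some dd := Option.ne_none_iff_exists'.mp hda
    have hbc' : c - b ≠ 0 := sub_ne_zero.mpr (fun h => hbc (by rw [h]))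
    simp only [crossRatio] at h
    simp only [gpoint, Option.some.injEq]
    linear_combination (div_eq_iff hbc').mp h
  | some a, none, some c =>
    obtain ⟨dd, rfl⟩ : ∃ dd, d = some dd := Option.ne_none_iff_exists'.mp hdb
    have hda' : dd - a ≠ 0 := sub_ne_zero.mpr (fun h => hda (by rw [h]))
    simp only [crossRatio] at h
    simp only [gpoint, Option.some.injEq]
    have h2 : c - a = x * (dd - a) := (div_eq_iff hda').mp h
    rw [h2, mul_div_cancel_left₀ _ hx0]; ring
  | some a, some b, none =>
    obtain ⟨dd, rfl⟩ : ∃ dd, d = some dd := Option.ne_none_iff_exists'.mp hdc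
    have hda' : dd - a ≠ 0 := sub_ne_zero.mpr (fun h => hda (by rw [h]))
    have hx1' : x - 1 ≠ 0 := sub_ne_zero.mpr hx1
    simp only [crossRatio] at h
    simp only [gpoint, Option.some.injEq]
    have h2 : dd - b = x * (dd - a) := (div_eq_iff hda').mp h
    field_simp
    linear_combination -h2
  | some a, some b, some c =>
    have hab' : b - a ≠ 0 := sub_ne_zero.mpr (fun h => hab (by rw [h]))
    have hac' : c - a ≠ 0 := sub_ne_zero.mpr (fun h => hac (by rw [h]))
    have hbc' : c - b ≠ 0 := sub_ne_zero.mpr (fun h => hbc (by rw [h]))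
    match d with
    | none =>
      simp only [crossRatio] at h
      simp only [gpoint, if_pos h.symm]
    | some dd =>
      have hda' : dd - a ≠ 0 := sub_ne_zero.mpr (fun h => hda (by rw [h]))
      simp only [crossRatio] at h
      have hk : ¬ x = (c - a) / (c - b) := by
        intro hkk
        rw [hkk] at h
        have hkne : (c - a) / (c - b) ≠ 0 := div_ne_zero hac' hbc'
        have h1 : (dd - b) / (dd - a) = 1 :=
          mul_left_cancel₀ hkne (h.trans (mul_one ((c - a) / (c - b))).symm)
        have h3 : dd - b = dd - a := (div_eq_one_iff_eq hda').mp h1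
        exact hab (by simp only [Option.some.injEq]; exact (sub_right_injective h3).symm)
      have h2 : (c - a) * (dd - b) = x * ((c - b) * (dd - a)) := by
        field_simp at h
        linear_combination h
      have hM : (c - a) - x * (c - b) ≠ 0 := by
        intro hm
        exact hk (by rw [sub_eq_zero.mp hm, mul_div_assoc, div_self hbc', mul_one])
      simp only [gpoint, if_neg hk, Option.some.injEq]
      rw [eq_div_iff hM]
      linear_combination h2

/-- If `f` is an `O`-preserving permutation of `F ∪ {∞}` (`O` a nonempty subset of
`F \ {0,1}`), then for every triple of distinct points `a,b,c` there is a
permutation `α` of `O` such that `f (g_x (a,b,c)) = g_{α x} (f a, f b, f c)` for all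
`x ∈ O`; here `g_x (a,b,c)` is characterized as the unique point `d ∉ {a,b,c}` with
`[a,b;c,d] = x`. -/
theorem ex_perm_of_O_preserving {F : Type*} [Field F] (O : Set F) (hne : O.Nonempty)
    (hO : ∀ x ∈ O, x ≠ 0 ∧ x ≠ 1)
    (f : Equiv.Perm (Option F)) (hf : OPreserving O f) :
    ∀ a b c : Option F, a ≠ b → a ≠ c → b ≠ c →
      ∃ α : {x // x ∈ O} ≃ {x // x ∈ O},
        ∀ (x : F) (hx : x ∈ O) (d : Option F),
          d ≠ a → d ≠ b → d ≠ c → crossRatio a b c d = x →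
            f d ≠ f a ∧ f d ≠ f b ∧ f d ≠ f c ∧
              crossRatio (f a) (f b) (f c) (f d) = (α ⟨x, hx⟩ : F) := by
  intro a b c hab hac hbc
  have fab : f a ≠ f b := f.injective.ne hab
  have fac : f a ≠ f c := f.injective.ne hac
  have fbc : f b ≠ f c := f.injective.ne hbc
  have Amem : ∀ p : {x // x ∈ O},
      crossRatio (f a) (f b) (f c) (f (gpoint a b c p.1)) ∈ O := by
    rintro ⟨x, hx⟩
    obtain ⟨hx0, hx1⟩ := hO x hx
    have hval := gpoint_spec a b c hab hac hbc x hx0 hx1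
    obtain ⟨h1, h2, h3⟩ := crossRatio_ne hx0 hx1 hval
    exact (hf a b c _ hab hac h1.symm hbc h2.symm h3.symm).mp (by rw [hval]; exact hx)
  have Bmem : ∀ q : {x // x ∈ O},
      crossRatio a b c (f.symm (gpoint (f a) (f b) (f c) q.1)) ∈ O := by
    rintro ⟨y, hy⟩
    obtain ⟨hy0, hy1⟩ := hO y hy
    have hval := gpoint_spec (f a) (f b) (f c) fab fac fbc y hy0 hy1
    obtain ⟨h1, h2, h3⟩ := crossRatio_ne hy0 hy1 hval
    set e := gpoint (f a) (f b) (f c) y with he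
    have hda : f.symm e ≠ a := fun h => h1 (h ▸ (f.apply_symm_apply e).symm)
    have hdb : f.symm e ≠ b := fun h => h2 (h ▸ (f.apply_symm_apply e).symm)
    have hdc : f.symm e ≠ c := fun h => h3 (h ▸ (f.apply_symm_apply e).symm)
    refine (hf a b c (f.symm e) hab hac hda.symm hbc hdb.symm hdc.symm).mpr ?_
    rw [f.apply_symm_apply]
    rw [hval]; exact hy
  refine ⟨⟨fun p => ⟨_, Amem p⟩, fun q => ⟨_, Bmem q⟩, ?_, ?_⟩, ?_⟩
  · rintro ⟨x, hx⟩
    obtain ⟨hx0, hx1⟩ := hO x hx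
    have hval := gpoint_spec a b c hab hac hbc x hx0 hx1
    obtain ⟨h1, h2, h3⟩ := crossRatio_ne hx0 hx1 hval
    set d := gpoint a b c x with hd
    have hy : crossRatio (f a) (f b) (f c) (f d) ∈ O := Amem ⟨x, hx⟩
    obtain ⟨hy0, hy1⟩ := hO _ hy
    have hfd : f d = gpoint (f a) (f b) (f c) (crossRatio (f a) (f b) (f c) (f d)) :=
      gpoint_unique fab fac fbc hy0 hy1 (f.injective.ne h1) (f.injective.ne h2)
        (f.injective.ne h3) rfl
    apply Subtype.ext
    show crossRatio a b c
        (f.symm (gpoint (f a) (f b) (f c) (crossRatio (f a) (f b) (f c) (f d)))) = x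
    rw [← hfd, f.symm_apply_apply]
    exact hval
  · rintro ⟨y, hy⟩
    obtain ⟨hy0, hy1⟩ := hO y hy
    have hval := gpoint_spec (f a) (f b) (f c) fab fac fbc y hy0 hy1
    obtain ⟨h1, h2, h3⟩ := crossRatio_ne hy0 hy1 hval
    set e := gpoint (f a) (f b) (f c) y with he
    have hfd : f (f.symm e) = e := f.apply_symm_apply e
    have hda : f.symm e ≠ a := fun h => h1 (h ▸ hfd.symm)
    have hdb : f.symm e ≠ b := fun h => h2 (h ▸ hfd.symm)
    have hdc : f.symm e ≠ c := fun h => h3 (h ▸ hfd.symm)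
    have hx : crossRatio a b c (f.symm e) ∈ O := Bmem ⟨y, hy⟩
    obtain ⟨hx0, hx1⟩ := hO _ hx
    have hd_eq : f.symm e = gpoint a b c (crossRatio a b c (f.symm e)) :=
      gpoint_unique hab hac hbc hx0 hx1 hda hdb hdc rfl
    apply Subtype.ext
    show crossRatio (f a) (f b) (f c)
        (f (gpoint a b c (crossRatio a b c (f.symm e)))) = y
    rw [← hd_eq, hfd]
    exact hval
  · intro x hx d hda hdb hdc hcr
    obtain ⟨hx0, hx1⟩ := hO x hx
    refine ⟨f.injective.ne hda, f.injective.ne hdb, f.injective.ne hdc, ?_⟩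
    have hd : d = gpoint a b c x := gpoint_unique hab hac hbc hx0 hx1 hda hdb hdc hcr
    show crossRatio (f a) (f b) (f c) (f d)
        = crossRatio (f a) (f b) (f c) (f (gpoint a b c x))
    rw [hd]
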